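/- In a semigraph algebra, for every word w there exist finitely many half-standard words a₁,…,a_n such that ww* = Σᵢ aᵢaᵢ*, and there exist half-standard words b₁,…,b_m and c₁,…,c_m with w = Σⱼ bⱼcⱼ* and d(w) = d(bⱼ) − d(cⱼ) for all j. In particular a semigraph algebra is linearly spanned by its standard words 𝒯₁𝒫𝒯₁*. -/

import Mathlib

/-- The set of minimal common extensions `𝒯₁^{(min)}(x,y)` of `x` and `y`:
pairs `(α,β)` in `𝒯₁` with `xα = yβ ≠ 0` of degree `d(x) ⊔ d(y)`. -/
def mceSet {k X : Type*} [Ring X] (T1 : Set X) (deg : X → (k →₀ ℕ))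
    (x y : X) : Set (X × X) :=
  {ab | ab.1 ∈ T1 ∧ ab.2 ∈ T1 ∧ x * ab.1 ≠ 0 ∧ x * ab.1 = y * ab.2 ∧
    deg (x * ab.1) = deg x ⊔ deg y}

/-- A `k`-semigraph algebra (Definition `DefSemigraphAlgebra`): a `*`-algebra
generated by a commuting multiplicatively closed set `𝒫` of projections and a
set `𝒯` of nonzero partial isometries forming a non-unital finitely aligned
`k`-semigraph (with unitization `𝒯₁ = 𝒯 ∪ {1}`), subject to the commutation
relations `p x = x q`, the expansion of `x* y` over minimal common extensions,
and carrying a gauge action (equivalently, it is the quotient of the free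
`*`-algebra by a subset of the fiber space). -/
structure SemigraphAlgebra (k : Type*) (X : Type*) [Ring X] [StarRing X]
    [Algebra ℂ X] where
  P : Set X
  T : Set X
  deg : X → (k →₀ ℕ)
  P_isProj : ∀ p ∈ P, p * p = p ∧ star p = p
  P_comm : ∀ p ∈ P, ∀ q ∈ P, p * q = q * p
  P_mulClosed : ∀ p ∈ P, ∀ q ∈ P, p * q ∈ P
  disjoint : ∀ t ∈ T, t ∉ P
  T_ne_zero : ∀ t ∈ T, t ≠ 0
  T_pisom : ∀ t ∈ T, t * star t * t = t
  T_mulClosed : ∀ s ∈ T, ∀ t ∈ T, s * t ≠ 0 → s * t ∈ T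
  one_notMem : (1 : X) ∉ T
  deg_one : deg 1 = 0
  deg_pos : ∀ t ∈ T, deg t ≠ 0
  deg_mul : ∀ s ∈ T, ∀ t ∈ T, s * t ≠ 0 → deg (s * t) = deg s + deg t
  ufp : ∀ x ∈ T, ∀ n₁ n₂ : k →₀ ℕ, deg x = n₁ + n₂ →
    ∃! ab : X × X, ab.1 ∈ insert (1:X) T ∧ ab.2 ∈ insert (1:X) T ∧
      x = ab.1 * ab.2 ∧ deg ab.1 = n₁ ∧ deg ab.2 = n₂
  finitelyAligned : ∀ x ∈ insert (1:X) T, ∀ y ∈ insert (1:X) T,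
    (mceSet (insert (1:X) T) deg x y).Finite
  P_commute_T : ∀ x ∈ T, ∀ p ∈ P, ∃ q ∈ P, p * x = x * q
  expansion : ∀ x (hx : x ∈ T), ∀ y (hy : y ∈ T), ∃ q : X × X → X,
    (∀ ab ∈ mceSet (insert (1:X) T) deg x y, q ab ∈ P) ∧
    star x * y =
      ∑ ab ∈ (finitelyAligned x (Set.mem_insert_of_mem _ hx)
          y (Set.mem_insert_of_mem _ hy)).toFinset,
        ab.1 * q ab * star ab.2
  gauge : ∀ lam : k → ℂ, (∀ i, ‖lam i‖ = 1) →
    ∃ σ : X ≃ₐ[ℂ] X, (∀ p ∈ P, σ p = p) ∧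
      ∀ t ∈ T, σ t = (∏ i ∈ (deg t).support, lam i ^ (deg t i)) • t

namespace SemigraphAlgebra

variable {k X : Type*} [Ring X] [StarRing X] [Algebra ℂ X]

/-- `𝒯₁`, the unitization of the semigraph `𝒯`. -/
def T1 (A : SemigraphAlgebra k X) : Set X := insert 1 A.T

end SemigraphAlgebra

namespace SemigraphAlgebra

variable {k X : Type*} [Ring X] [StarRing X] [Algebra ℂ X]

/-- A word in the generators `𝒯 ∪ 𝒫 ∪ 𝒯* ∪ 𝒫*`, encoded as a nonempty list of
letters, each a generator together with a flag recording a star. -/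
def IsWordList (A : SemigraphAlgebra k X) (l : List (X × Bool)) : Prop :=
  l ≠ [] ∧ ∀ a ∈ l, a.1 ∈ A.T ∪ A.P

/-- The element of `X` represented by a word. -/
def evalWord (l : List (X × Bool)) : X :=
  (l.map fun a => if a.2 then star a.1 else a.1).prod

/-- The formal adjoint of a word. -/
def starWord (l : List (X × Bool)) : List (X × Bool) :=
  l.reverse.map fun a => (a.1, !a.2)

end SemigraphAlgebra

namespace SemigraphAlgebra

variable {k X : Type*} [Ring X] [StarRing X] [Algebra ℂ X]

open Classical in
/-- The degree of a word: letters in `𝒫` have degree `0`, letters in `𝒯` their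
semigraph degree (in `ℤ^k`), starred letters negated degree. -/
noncomputable def wordDeg (A : SemigraphAlgebra k X) (l : List (X × Bool)) :
    k →₀ ℤ :=
  (l.map fun a => (if a.2 then (-1 : ℤ) else 1) •
    (if a.1 ∈ A.P then 0 else (A.deg a.1).mapRange (Nat.cast) Nat.cast_zero)).sum

/-- The set of standard words `𝒯₁𝒫𝒯₁*`. -/
def standardWords (A : SemigraphAlgebra k X) : Set X :=
  {x | ∃ s t p : X, s ∈ A.T1 ∧ t ∈ A.T1 ∧ p ∈ A.P ∧ x = s * p * star t}

end SemigraphAlgebra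

namespace SemigraphAlgebra

variable {k X : Type*} [Ring X] [StarRing X] [Algebra ℂ X] (A : SemigraphAlgebra k X)

/-- Integer-valued degree. -/
noncomputable def DD (x : X) : k →₀ ℤ := (A.deg x).mapRange (Nat.cast) Nat.cast_zero

lemma star_P {p : X} (hp : p ∈ A.P) : star p = p := (A.P_isProj p hp).2
lemma sq_P {p : X} (hp : p ∈ A.P) : p * p = p := (A.P_isProj p hp).1

lemma one_mem_T1 : (1 : X) ∈ A.T1 := Set.mem_insert _ _
lemma T_subset_T1 {t : X} (ht : t ∈ A.T) : t ∈ A.T1 := Set.mem_insert_of_mem _ ht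
lemma T1_cases {u : X} (hu : u ∈ A.T1) : u = 1 ∨ u ∈ A.T := hu

lemma mul_mem_T1 {u v : X} (hu : u ∈ A.T1) (hv : v ∈ A.T1) (h : u * v ≠ 0) :
    u * v ∈ A.T1 := by
  rcases A.T1_cases hu with rfl | hu
  · simpa using hv
  rcases A.T1_cases hv with rfl | hv
  · simpa using A.T_subset_T1 hu
  · exact A.T_subset_T1 (A.T_mulClosed u hu v hv h)

lemma deg_mul_T1 {u v : X} (hu : u ∈ A.T1) (hv : v ∈ A.T1) (h : u * v ≠ 0) :
    A.deg (u * v) = A.deg u + A.deg v := by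
  rcases A.T1_cases hu with rfl | hu
  · simp [A.deg_one]
  rcases A.T1_cases hv with rfl | hv
  · simp [A.deg_one]
  · exact A.deg_mul u hu v hv h

lemma DD_one : A.DD (1 : X) = 0 := by
  simp [DD, A.deg_one]

lemma DD_mul_T1 {u v : X} (hu : u ∈ A.T1) (hv : v ∈ A.T1) (h : u * v ≠ 0) :
    A.DD (u * v) = A.DD u + A.DD v := by
  rw [DD, A.deg_mul_T1 hu hv h, Finsupp.mapRange_add (by exact_mod_cast fun a b => rfl)]
  rfl

lemma P_comm_T1 {u p : X} (hu : u ∈ A.T1) (hp : p ∈ A.P) :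
    ∃ q ∈ A.P, p * u = u * q := by
  rcases A.T1_cases hu with rfl | hu
  · exact ⟨p, hp, by simp⟩
  · exact A.P_commute_T u hu p hp

lemma mce_same {x y : X} (hx : x ∈ A.T1) (hy : y ∈ A.T1) (hdeg : A.deg x = A.deg y)
    {ab : X × X} (hab : ab ∈ mceSet A.T1 A.deg x y) :
    ab.1 = 1 ∧ ab.2 = 1 ∧ x = y := by
  obtain ⟨h1, h2, hne, heq, hd⟩ := hab
  have hsup : A.deg x ⊔ A.deg y = A.deg x := by rw [← hdeg, sup_idem]
  have hd1 : A.deg ab.1 = 0 := by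
    have := A.deg_mul_T1 hx h1 hne
    rw [hd, hsup] at this
    exact (add_eq_left).mp this.symm
  have hab1 : ab.1 = 1 := by
    rcases A.T1_cases h1 with h | h
    · exact h
    · exact absurd hd1 (A.deg_pos _ h)
  have hne' : y * ab.2 ≠ 0 := heq ▸ hne
  have hd2 : A.deg ab.2 = 0 := by
    have := A.deg_mul_T1 hy h2 hne'
    rw [← heq, hd, hsup, hdeg] at this
    exact (add_eq_left).mp this.symm
  have hab2 : ab.2 = 1 := by
    rcases A.T1_cases h2 with h | h
    · exact h
    · exact absurd hd2 (A.deg_pos _ h)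
  refine ⟨hab1, hab2, ?_⟩
  have := heq
  rw [hab1, hab2, mul_one, mul_one] at this
  exact this

lemma star_mul_self_mem_P {t : X} (ht : t ∈ A.T) : star t * t ∈ A.P := by
  obtain ⟨q, hq, heq⟩ := A.expansion t ht t ht
  have hmem : ((1 : X), (1 : X)) ∈ mceSet A.T1 A.deg t t :=
    ⟨A.one_mem_T1, A.one_mem_T1, by simpa using A.T_ne_zero t ht, rfl, by simp⟩
  have hF : (A.finitelyAligned t (Set.mem_insert_of_mem _ ht)
      t (Set.mem_insert_of_mem _ ht)).toFinset = {((1 : X), (1 : X))} := by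
    ext ab
    simp only [Set.Finite.mem_toFinset, Finset.mem_singleton]
    constructor
    · intro h
      obtain ⟨h1, h2, _⟩ := A.mce_same (A.T_subset_T1 ht) (A.T_subset_T1 ht) rfl h
      exact Prod.ext h1 h2
    · rintro rfl; exact hmem
  rw [hF, Finset.sum_singleton] at heq
  simp only [one_mul, star_one, mul_one] at heq
  rw [heq]
  exact hq _ hmem

lemma orth {u v : X} (hu : u ∈ A.T1) (hv : v ∈ A.T1) (hdeg : A.deg u = A.deg v)
    (hne : u ≠ v) : star u * v = 0 := by
  rcases A.T1_cases hu with rfl | hu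
  · rcases A.T1_cases hv with rfl | hv
    · exact absurd rfl hne
    · exact absurd (hdeg.symm.trans A.deg_one) (A.deg_pos _ hv)
  rcases A.T1_cases hv with rfl | hv
  · exact absurd (hdeg.trans A.deg_one) (A.deg_pos _ hu)
  obtain ⟨q, hq, heq⟩ := A.expansion u hu v hv
  have hF : (A.finitelyAligned u (Set.mem_insert_of_mem _ hu)
      v (Set.mem_insert_of_mem _ hv)).toFinset = ∅ := by
    ext ab
    simp only [Set.Finite.mem_toFinset, Finset.notMem_empty, iff_false]
    intro h
    exact hne (A.mce_same (A.T_subset_T1 hu) (A.T_subset_T1 hv) hdeg h).2.2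
  rw [hF, Finset.sum_empty] at heq
  exact heq

lemma mce_deg_snd {x s : X} (hx : x ∈ A.T1) (hs : s ∈ A.T1) {ab ab' : X × X}
    (h : ab ∈ mceSet A.T1 A.deg x s) (h' : ab' ∈ mceSet A.T1 A.deg x s) :
    A.deg ab.2 = A.deg ab'.2 := by
  obtain ⟨h1, h2, hne, heq, hd⟩ := h
  obtain ⟨h1', h2', hne', heq', hd'⟩ := h'
  have e1 : A.deg s + A.deg ab.2 = A.deg x ⊔ A.deg s := by
    rw [← A.deg_mul_T1 hs h2 (heq ▸ hne), ← heq, hd]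
  have e2 : A.deg s + A.deg ab'.2 = A.deg x ⊔ A.deg s := by
    rw [← A.deg_mul_T1 hs h2' (heq' ▸ hne'), ← heq', hd']
  exact add_left_cancel (e1.trans e2.symm)

lemma mce_inj {x s : X} (hx : x ∈ A.T) (hs : s ∈ A.T1) {ab ab' : X × X}
    (h : ab ∈ mceSet A.T1 A.deg x s) (h' : ab' ∈ mceSet A.T1 A.deg x s)
    (h2 : ab.2 = ab'.2) : ab = ab' := by
  obtain ⟨m1, m2, hne, heq, hd⟩ := h
  obtain ⟨m1', m2', hne', heq', hd'⟩ := h'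
  have hz : x * ab.1 = x * ab'.1 := by rw [heq, heq', h2]
  have hxT1 := A.T_subset_T1 hx
  have hdz : A.deg (x * ab.1) = A.deg (x * ab'.1) := by rw [hz]
  have hdeg1 : A.deg ab.1 = A.deg ab'.1 := by
    have e1 := A.deg_mul_T1 hxT1 m1 hne
    have e2 := A.deg_mul_T1 hxT1 m1' (hz ▸ hne)
    rw [e1, e2] at hdz
    exact add_left_cancel hdz
  have hzT : x * ab.1 ∈ A.T := by
    rcases A.T1_cases m1 with hh | hh
    · rw [hh, mul_one]; exact hx
    · exact A.T_mulClosed x hx ab.1 hh hne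
  obtain ⟨w, hw, huniq⟩ := A.ufp (x * ab.1) hzT (A.deg x) (A.deg ab.1)
    (A.deg_mul_T1 hxT1 m1 hne)
  have k1 : (x, ab.1) = w := huniq (x, ab.1) ⟨Set.mem_insert_of_mem _ hx, m1, rfl, rfl, rfl⟩
  have k2 : (x, ab'.1) = w := huniq (x, ab'.1)
    ⟨Set.mem_insert_of_mem _ hx, m1', hz, rfl, hdeg1.symm⟩
  have : ab.1 = ab'.1 := congrArg Prod.snd (k1.trans k2.symm)
  exact Prod.ext this h2

end SemigraphAlgebra
namespace SemigraphAlgebra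

variable {k X : Type*} [Ring X] [StarRing X] [Algebra ℂ X] (A : SemigraphAlgebra k X)

lemma expand_p {x s p : X} (hx : x ∈ A.T) (hs : s ∈ A.T) (hp : p ∈ A.P) :
    ∃ (F : Finset (X × X)) (τ : X × X → X),
      (∀ ab ∈ F, ab ∈ mceSet A.T1 A.deg x s) ∧
      (∀ ab ∈ F, τ ab ∈ A.P) ∧
      star x * s * p = ∑ ab ∈ F, (ab.1 * τ ab) * star ab.2 := by
  obtain ⟨Q, hQ, heq⟩ := A.expansion x hx s hs
  set F := (A.finitelyAligned x (Set.mem_insert_of_mem _ hx)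
      s (Set.mem_insert_of_mem _ hs)).toFinset with hF
  have hFmem : ∀ ab ∈ F, ab ∈ mceSet A.T1 A.deg x s := fun ab hab =>
    (Set.Finite.mem_toFinset _).mp hab
  have hch : ∀ ab : X × X, ∃ q2 : X, ab ∈ F → (q2 ∈ A.P ∧ p * ab.2 = ab.2 * q2) := by
    intro ab
    by_cases h : ab ∈ F
    · obtain ⟨q2, hq2, he⟩ := A.P_comm_T1 (hFmem ab h).2.1 hp
      exact ⟨q2, fun _ => ⟨hq2, he⟩⟩
    · exact ⟨0, fun hh => absurd hh h⟩
  choose q2 hq2 using hch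
  refine ⟨F, fun ab => Q ab * q2 ab, hFmem, ?_, ?_⟩
  · intro ab hab
    exact A.P_mulClosed _ (hQ ab (hFmem ab hab)) _ (hq2 ab hab).1
  · rw [heq, Finset.sum_mul]
    refine Finset.sum_congr rfl fun ab hab => ?_
    have hcomm : star ab.2 * p = q2 ab * star ab.2 := by
      have h1 : star ab.2 * p = star (p * ab.2) := by
        rw [star_mul, A.star_P hp]
      rw [h1, (hq2 ab hab).2, star_mul, A.star_P (hq2 ab hab).1]
    calc ab.1 * Q ab * star ab.2 * p = ab.1 * Q ab * (star ab.2 * p) := by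
          rw [mul_assoc]
      _ = ab.1 * Q ab * (q2 ab * star ab.2) := by rw [hcomm]
      _ = (ab.1 * (Q ab * q2 ab)) * star ab.2 := by noncomm_ring
  
lemma sum_fin_map {α M : Type*} [AddCommMonoid M] (L : List α) (f : α → M) :
    (∑ i : Fin L.length, f (L.get i)) = (L.map f).sum := by
  induction L with
  | nil => simp
  | cons a L ih => rw [List.map_cons, List.sum_cons, ← ih]; exact Fin.sum_univ_succ _

lemma evalWord_cons (a : X × Bool) (l : List (X × Bool)) :
    evalWord (a :: l) = (if a.2 then star a.1 else a.1) * evalWord l := by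
  simp [evalWord]

open Classical in
/-- Degree of a single letter. -/
noncomputable def letterDeg (a : X × Bool) : k →₀ ℤ :=
  (if a.2 then (-1 : ℤ) else 1) • (if a.1 ∈ A.P then 0 else (A.deg a.1).mapRange (Nat.cast) Nat.cast_zero)

lemma wordDeg_cons (a : X × Bool) (l : List (X × Bool)) :
    A.wordDeg (a :: l) = A.letterDeg a + A.wordDeg l := by
  simp [wordDeg, letterDeg]

lemma wordDeg_singleton (a : X × Bool) : A.wordDeg [a] = A.letterDeg a := by
  simp [wordDeg, letterDeg]

lemma letterDeg_P {a : X × Bool} (ha : a.1 ∈ A.P) : A.letterDeg a = 0 := by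
  simp [letterDeg, if_pos ha]

lemma letterDeg_T_false {a : X × Bool} (ha : a.1 ∈ A.T) (hf : a.2 = false) :
    A.letterDeg a = A.DD a.1 := by
  simp [letterDeg, hf, if_neg (A.disjoint a.1 ha), DD]

lemma letterDeg_T_true {a : X × Bool} (ha : a.1 ∈ A.T) (hf : a.2 = true) :
    A.letterDeg a = -A.DD a.1 := by
  simp [letterDeg, hf, if_neg (A.disjoint a.1 ha), DD]

end SemigraphAlgebra
namespace SemigraphAlgebra

variable {k X : Type*} [Ring X] [StarRing X] [Algebra ℂ X] (A : SemigraphAlgebra k X)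

lemma DD_of_deg_eq {a b c d : X} (h : A.deg a + A.deg b = A.deg c + A.deg d) :
    A.DD a + A.DD b = A.DD c + A.DD d := by
  have := congrArg (Finsupp.mapRange (Nat.cast : ℕ → ℤ) Nat.cast_zero) h
  rwa [Finsupp.mapRange_add (fun a b => by exact_mod_cast rfl),
    Finsupp.mapRange_add (fun a b => by exact_mod_cast rfl)] at this

/-- One step of the standard-form rewriting for part (b). -/
lemma stepB (x : X × Bool) (hx : x.1 ∈ A.T ∪ A.P) {s p t q : X}
    (hs : s ∈ A.T1) (hp : p ∈ A.P) (ht : t ∈ A.T1) (hq : q ∈ A.P) :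
    ∃ L : List (X × X × X × X),
      (∀ e ∈ L, e.1 ∈ A.T1 ∧ e.2.1 ∈ A.P ∧ e.2.2.1 ∈ A.T1 ∧ e.2.2.2 ∈ A.P) ∧
      (if x.2 then star x.1 else x.1) * ((s * p) * star (t * q)) =
        (L.map fun e => (e.1 * e.2.1) * star (e.2.2.1 * e.2.2.2)).sum ∧
      ∀ e ∈ L, A.DD e.1 - A.DD e.2.2.1 = A.letterDeg x + (A.DD s - A.DD t) := by
  classical
  rcases hx with hyT | hyP
  swap
  · -- letter in P
    obtain ⟨q', hq', hcomm⟩ := A.P_comm_T1 hs hyP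
    have hxval : (if x.2 then star x.1 else x.1) = x.1 := by
      cases x.2 <;> simp [A.star_P hyP]
    refine ⟨[(s, q' * p, t, q)], ?_, ?_, ?_⟩
    · rintro e he
      simp only [List.mem_singleton] at he
      subst he
      exact ⟨hs, A.P_mulClosed _ hq' _ hp, ht, hq⟩
    · rw [hxval]
      have : x.1 * ((s * p) * star (t * q)) = ((x.1 * s) * p) * star (t * q) := by
        noncomm_ring
      rw [this, hcomm]
      simp only [List.map_cons, List.map_nil, List.sum_cons, List.sum_nil, add_zero]
      noncomm_ring
    · rintro e he
      simp only [List.mem_singleton] at he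
      subst he
      rw [A.letterDeg_P hyP]
      simp
  rcases hb : x.2 with _ | _
  · -- letter in T, not starred
    simp only [hb, if_neg Bool.false_ne_true, Bool.false_eq_true, if_false]
    by_cases h0 : x.1 * s = 0
    · refine ⟨[], ?_, ?_, ?_⟩
      · simp
      · have : x.1 * ((s * p) * star (t * q)) = ((x.1 * s) * p) * star (t * q) := by
          noncomm_ring
        rw [this, h0]
        simp
      · simp
    · refine ⟨[(x.1 * s, p, t, q)], ?_, ?_, ?_⟩
      · rintro e he
        simp only [List.mem_singleton] at he
        subst he
        exact ⟨A.mul_mem_T1 (A.T_subset_T1 hyT) hs h0, hp, ht, hq⟩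
      · simp only [List.map_cons, List.map_nil, List.sum_cons, List.sum_nil, add_zero]
        noncomm_ring
      · rintro e he
        simp only [List.mem_singleton] at he
        subst he
        rw [A.letterDeg_T_false hyT hb, A.DD_mul_T1 (A.T_subset_T1 hyT) hs h0]
        abel
  -- letter in T, starred
  rw [if_pos rfl]
  rcases A.T1_cases hs with rfl | hsT
  · -- s = 1
    obtain ⟨q₃, hq₃, e1⟩ := A.P_commute_T x.1 hyT (q * p) (A.P_mulClosed _ hq _ hp)
    have e2 : (t * q) * p * x.1 = (t * x.1) * q₃ := by
      calc (t * q) * p * x.1 = t * ((q * p) * x.1) := by noncomm_ring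
        _ = t * (x.1 * q₃) := by rw [e1]
        _ = (t * x.1) * q₃ := by noncomm_ring
    have key : star x.1 * (((1:X) * p) * star (t * q)) = star ((t * x.1) * q₃) := by
      calc star x.1 * (((1:X) * p) * star (t * q))
          = star x.1 * (star p * star (t * q)) := by rw [one_mul, A.star_P hp]
        _ = star ((t * q) * p * x.1) := by simp [star_mul, mul_assoc]
        _ = star ((t * x.1) * q₃) := by rw [e2]
    by_cases ht0 : t * x.1 = 0
    · refine ⟨[], ?_, ?_, ?_⟩
      · simp
      · rw [key, ht0]; simp
      · simp
    · refine ⟨[(1, q₃, t * x.1, q₃)], ?_, ?_, ?_⟩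
      · rintro e he
        simp only [List.mem_singleton] at he
        subst he
        exact ⟨A.one_mem_T1, hq₃, A.mul_mem_T1 ht (A.T_subset_T1 hyT) ht0, hq₃⟩
      · simp only [List.map_cons, List.map_nil, List.sum_cons, List.sum_nil, add_zero]
        rw [key]
        have hfix : ((1:X) * q₃) * star ((t * x.1) * q₃) = star ((t * x.1) * q₃) := by
          simp only [one_mul, star_mul, A.star_P hq₃, ← mul_assoc, A.sq_P hq₃]
        rw [hfix]
      · rintro e he
        simp only [List.mem_singleton] at he
        subst he
        rw [A.letterDeg_T_true hyT hb, A.DD_mul_T1 ht (A.T_subset_T1 hyT) ht0, A.DD_one]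
        abel
  · -- s ∈ T : use the expansion
    obtain ⟨F, τ, hmce, hτ, hsum⟩ := A.expand_p hyT hsT hp
    have hch : ∀ ab : X × X, ∃ q3 : X, ab ∈ F → (q3 ∈ A.P ∧ q * ab.2 = ab.2 * q3) := by
      intro ab
      by_cases h : ab ∈ F
      · obtain ⟨q3, hq3, he⟩ := A.P_comm_T1 (hmce ab h).2.1 hq
        exact ⟨q3, fun _ => ⟨hq3, he⟩⟩
      · exact ⟨0, fun hh => absurd hh h⟩
    choose q₃ hq₃ using hch
    have hterm : ∀ ab ∈ F, (((ab.1 * τ ab) * star ab.2) * star (t * q)) =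
        (ab.1 * τ ab) * star ((t * ab.2) * q₃ ab) := by
      intro ab hab
      have e3 : (t * q) * ab.2 = (t * ab.2) * q₃ ab := by
        calc (t * q) * ab.2 = t * (q * ab.2) := by noncomm_ring
          _ = t * (ab.2 * q₃ ab) := by rw [(hq₃ ab hab).2]
          _ = (t * ab.2) * q₃ ab := by noncomm_ring
      calc ((ab.1 * τ ab) * star ab.2) * star (t * q)
          = (ab.1 * τ ab) * (star ab.2 * star (t * q)) := mul_assoc _ _ _
        _ = (ab.1 * τ ab) * star ((t * q) * ab.2) := by rw [← star_mul]
        _ = (ab.1 * τ ab) * star ((t * ab.2) * q₃ ab) := by rw [e3]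
    set G := F.filter (fun ab => t * ab.2 ≠ 0) with hG
    refine ⟨G.toList.map (fun ab => (ab.1, τ ab, t * ab.2, q₃ ab)), ?_, ?_, ?_⟩
    · rintro e he
      simp only [List.mem_map] at he
      obtain ⟨ab, habL, rfl⟩ := he
      have hab' := Finset.mem_toList.mp habL
      rw [hG, Finset.mem_filter] at hab'
      obtain ⟨habF, hnz⟩ := hab'
      exact ⟨(hmce ab habF).1, hτ ab habF,
        A.mul_mem_T1 ht (hmce ab habF).2.1 hnz, (hq₃ ab habF).1⟩
    · have step1 : star x.1 * ((s * p) * star (t * q)) =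
          (star x.1 * s * p) * star (t * q) := by noncomm_ring
      rw [step1, hsum, Finset.sum_mul]
      rw [List.map_map]
      rw [Finset.sum_map_toList]
      rw [hG, Finset.sum_filter]
      refine Finset.sum_congr rfl fun ab hab => ?_
      rw [hterm ab hab]
      by_cases hnz : t * ab.2 = 0
      · rw [if_neg (by simpa using hnz), hnz, zero_mul, star_zero, mul_zero]
      · rw [if_pos hnz]
        rfl
    · rintro e he
      simp only [List.mem_map] at he
      obtain ⟨ab, habL, rfl⟩ := he
      have hab' := Finset.mem_toList.mp habL
      rw [hG, Finset.mem_filter] at hab'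
      obtain ⟨habF, hnz⟩ := hab'
      obtain ⟨m1, m2, hne, heqq, hd⟩ := hmce ab habF
      have hs1 := A.T_subset_T1 hsT
      have hx1 := A.T_subset_T1 hyT
      have hN : A.deg x.1 + A.deg ab.1 = A.deg s + A.deg ab.2 := by
        rw [← A.deg_mul_T1 hx1 m1 hne, ← A.deg_mul_T1 hs1 m2 (heqq ▸ hne), heqq]
      have hZ := A.DD_of_deg_eq hN
      have hsub : A.DD ab.1 - A.DD ab.2 = A.DD s - A.DD x.1 := by
        rw [sub_eq_sub_iff_add_eq_add, add_comm (A.DD ab.1)]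
        exact hZ
      rw [A.letterDeg_T_true hyT hb, A.DD_mul_T1 ht m2 hnz]
      calc A.DD ab.1 - (A.DD t + A.DD ab.2)
          = (A.DD ab.1 - A.DD ab.2) - A.DD t := by abel
        _ = (A.DD s - A.DD x.1) - A.DD t := by rw [hsub]
        _ = -A.DD x.1 + (A.DD s - A.DD t) := by abel

end SemigraphAlgebra
namespace SemigraphAlgebra

variable {k X : Type*} [Ring X] [StarRing X] [Algebra ℂ X] (A : SemigraphAlgebra k X)

/-- Standard-form condition on the entries of a representation list. -/
def goodB (e : X × X × X × X) : Prop :=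
  e.1 ∈ A.T1 ∧ e.2.1 ∈ A.P ∧ e.2.2.1 ∈ A.T1 ∧ e.2.2.2 ∈ A.P

lemma stepB_list (x : X × Bool) (hx : x.1 ∈ A.T ∪ A.P) (c : k →₀ ℤ)
    (L' : List (X × X × X × X))
    (h : ∀ e ∈ L', A.goodB e ∧ A.DD e.1 - A.DD e.2.2.1 = c) :
    ∃ L : List (X × X × X × X),
      (∀ e ∈ L, A.goodB e ∧ A.DD e.1 - A.DD e.2.2.1 = A.letterDeg x + c) ∧
      (L'.map fun e => (if x.2 then star x.1 else x.1) *
          ((e.1 * e.2.1) * star (e.2.2.1 * e.2.2.2))).sum =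
        (L.map fun e => (e.1 * e.2.1) * star (e.2.2.1 * e.2.2.2)).sum := by
  induction L' with
  | nil => exact ⟨[], by simp, by simp⟩
  | cons e L' ih =>
    obtain ⟨⟨he1, he2, he3, he4⟩, hdeg⟩ := h e (List.mem_cons_self)
    obtain ⟨L₁, hL₁good, hL₁sum, hL₁deg⟩ := A.stepB x hx he1 he2 he3 he4
    obtain ⟨L₂, hL₂, hL₂sum⟩ := ih (fun e' he' => h e' (List.mem_cons_of_mem _ he'))
    refine ⟨L₁ ++ L₂, ?_, ?_⟩
    · intro e' he'
      rcases List.mem_append.mp he' with h1 | h2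
      · refine ⟨?_, ?_⟩
        · obtain ⟨a1, a2, a3, a4⟩ := hL₁good e' h1
          exact ⟨a1, a2, a3, a4⟩
        · rw [hL₁deg e' h1, hdeg]
      · exact hL₂ e' h2
    · rw [List.map_cons, List.sum_cons, List.map_append, List.sum_append,
        hL₁sum, hL₂sum]

lemma repB (l : List (X × Bool)) (hl : A.IsWordList l) :
    ∃ L : List (X × X × X × X),
      (∀ e ∈ L, A.goodB e ∧ A.DD e.1 - A.DD e.2.2.1 = A.wordDeg l) ∧
      evalWord l = (L.map fun e => (e.1 * e.2.1) * star (e.2.2.1 * e.2.2.2)).sum := by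
  obtain ⟨hne, hmem⟩ := hl
  induction l with
  | nil => exact absurd rfl hne
  | cons a l ih =>
    have ha := hmem a (List.mem_cons_self)
    rcases l with _ | ⟨b, l'⟩
    · -- single letter
      rw [wordDeg_singleton]
      rcases ha with haT | haP
      · rcases hf : a.2 with _ | _
        · -- unstarred element of T
          have hq0 := A.star_mul_self_mem_P haT
          refine ⟨[(a.1, star a.1 * a.1, 1, star a.1 * a.1)], ?_, ?_⟩
          · rintro e he
            simp only [List.mem_singleton] at he
            subst he
            constructor
            · exact ⟨A.T_subset_T1 haT, hq0, A.one_mem_T1, hq0⟩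
            · rw [A.letterDeg_T_false haT hf, A.DD_one]; abel
          · simp only [List.map_cons, List.map_nil, List.sum_cons, List.sum_nil, add_zero]
            have pis : a.1 * (star a.1 * a.1) = a.1 := by
              rw [← mul_assoc]; exact A.T_pisom a.1 haT
            rw [one_mul, A.star_P hq0, pis, pis]
            simp [evalWord, hf]
        · -- starred element of T
          have hq0 := A.star_mul_self_mem_P haT
          refine ⟨[(1, star a.1 * a.1, a.1, star a.1 * a.1)], ?_, ?_⟩
          · rintro e he
            simp only [List.mem_singleton] at he
            subst he
            constructor
            · exact ⟨A.one_mem_T1, hq0, A.T_subset_T1 haT, hq0⟩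
            · rw [A.letterDeg_T_true haT hf, A.DD_one]; abel
          · simp only [List.map_cons, List.map_nil, List.sum_cons, List.sum_nil, add_zero]
            have pis : a.1 * (star a.1 * a.1) = a.1 := by
              rw [← mul_assoc]; exact A.T_pisom a.1 haT
            have h2 : star a.1 * (a.1 * star a.1) = star a.1 := by
              have := congrArg star (A.T_pisom a.1 haT)
              rw [star_mul, star_mul] at this
              simpa using this
            rw [one_mul, pis, mul_assoc, h2]
            simp [evalWord, hf]
      · -- element of P
        refine ⟨[(1, a.1, 1, a.1)], ?_, ?_⟩
        · rintro e he
          simp only [List.mem_singleton] at he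
          subst he
          constructor
          · exact ⟨A.one_mem_T1, haP, A.one_mem_T1, haP⟩
          · rw [A.letterDeg_P haP]; simp
        · simp only [List.map_cons, List.map_nil, List.sum_cons, List.sum_nil, add_zero]
          rw [one_mul, A.star_P haP, A.sq_P haP]
          cases hf : a.2 <;> simp [evalWord, hf, A.star_P haP]
    · -- at least two letters
      obtain ⟨L', hL', hsum'⟩ := ih (List.cons_ne_nil _ _)
        (fun e he => hmem e (List.mem_cons_of_mem _ he))
      obtain ⟨L, hL, hsum⟩ := A.stepB_list a ha (A.wordDeg (b :: l')) L' hL'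
      refine ⟨L, ?_, ?_⟩
      · intro e he
        rw [A.wordDeg_cons]
        exact hL e he
      · rw [evalWord_cons, hsum', ← hsum, ← List.sum_map_mul_left]

end SemigraphAlgebra
namespace SemigraphAlgebra

variable {k X : Type*} [Ring X] [StarRing X] [Algebra ℂ X] (A : SemigraphAlgebra k X)

lemma conj_sq (v w : X) : v * (w * star w) * star v = (v * w) * star (v * w) := by
  rw [star_mul]; noncomm_ring

/-- One step of the rewriting for part (a). -/
lemma stepA (x : X × Bool) (hx : x.1 ∈ A.T ∪ A.P) {s p : X}
    (hs : s ∈ A.T1) (hp : p ∈ A.P) :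
    ∃ L : List (X × X),
      (∀ e ∈ L, e.1 ∈ A.T1 ∧ e.2 ∈ A.P) ∧
      ((if x.2 then star x.1 else x.1) * (s * p)) *
          star ((if x.2 then star x.1 else x.1) * (s * p)) =
        (L.map fun e => (e.1 * e.2) * star (e.1 * e.2)).sum := by
  classical
  rcases hx with hyT | hyP
  swap
  · -- letter in P
    obtain ⟨q', hq', hcomm⟩ := A.P_comm_T1 hs hyP
    have hxval : (if x.2 then star x.1 else x.1) = x.1 := by
      cases x.2 <;> simp [A.star_P hyP]
    have hv : x.1 * (s * p) = s * (q' * p) := by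
      calc x.1 * (s * p) = (x.1 * s) * p := by noncomm_ring
        _ = (s * q') * p := by rw [hcomm]
        _ = s * (q' * p) := by noncomm_ring
    refine ⟨[(s, q' * p)], ?_, ?_⟩
    · rintro e he
      simp only [List.mem_singleton] at he
      subst he
      exact ⟨hs, A.P_mulClosed _ hq' _ hp⟩
    · rw [hxval, hv]
      simp
  rcases hb : x.2 with _ | _
  · -- letter in T, not starred
    simp only [hb, Bool.false_eq_true, if_false]
    by_cases h0 : x.1 * s = 0
    · refine ⟨[], by simp, ?_⟩
      have : x.1 * (s * p) = (x.1 * s) * p := by noncomm_ring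
      rw [this, h0]
      simp
    · refine ⟨[(x.1 * s, p)], ?_, ?_⟩
      · rintro e he
        simp only [List.mem_singleton] at he
        subst he
        exact ⟨A.mul_mem_T1 (A.T_subset_T1 hyT) hs h0, hp⟩
      · have : x.1 * (s * p) = (x.1 * s) * p := by noncomm_ring
        rw [this]
        simp
  -- letter in T, starred
  rw [if_pos rfl]
  rcases A.T1_cases hs with rfl | hsT
  · -- s = 1
    obtain ⟨q₂, hq₂, e1⟩ := A.P_commute_T x.1 hyT p hp
    have hr : (star x.1 * x.1) * q₂ ∈ A.P :=
      A.P_mulClosed _ (A.star_mul_self_mem_P hyT) _ hq₂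
    refine ⟨[(1, (star x.1 * x.1) * q₂)], ?_, ?_⟩
    · rintro e he
      simp only [List.mem_singleton] at he
      subst he
      exact ⟨A.one_mem_T1, hr⟩
    · have hv : (star x.1 * ((1:X) * p)) * star (star x.1 * ((1:X) * p)) =
          (star x.1 * x.1) * q₂ := by
        rw [one_mul, star_mul, star_star, A.star_P hp]
        calc (star x.1 * p) * (p * x.1) = star x.1 * ((p * p) * x.1) := by noncomm_ring
          _ = star x.1 * (p * x.1) := by rw [A.sq_P hp]
          _ = star x.1 * (x.1 * q₂) := by rw [e1]
          _ = (star x.1 * x.1) * q₂ := by noncomm_ring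
      rw [hv]
      simp only [List.map_cons, List.map_nil, List.sum_cons, List.sum_nil, add_zero]
      rw [one_mul, A.star_P hr, A.sq_P hr]
  · -- s ∈ T : expansion plus orthogonality
    obtain ⟨F, τ, hmce, hτ, hsum⟩ := A.expand_p hyT hsT hp
    set ρ : X × X → X := fun ab => τ ab * (star ab.2 * ab.2) * τ ab with hρdef
    have hρ : ∀ ab ∈ F, ρ ab ∈ A.P := by
      intro ab hab
      rcases A.T1_cases (hmce ab hab).2.1 with h1 | hT
      · have : ρ ab = τ ab := by
          rw [hρdef]; simp only [h1, star_one, mul_one, one_mul]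
          exact A.sq_P (hτ ab hab)
        rw [this]; exact hτ ab hab
      · exact A.P_mulClosed _ (A.P_mulClosed _ (hτ ab hab) _
          (A.star_mul_self_mem_P hT)) _ (hτ ab hab)
    have hv : star x.1 * (s * p) = ∑ ab ∈ F, (ab.1 * τ ab) * star ab.2 := by
      rw [← hsum]; noncomm_ring
    have hvs : star (∑ ab ∈ F, (ab.1 * τ ab) * star ab.2) =
        ∑ ab ∈ F, ab.2 * (τ ab * star ab.1) := by
      rw [star_sum]
      refine Finset.sum_congr rfl fun ab hab => ?_
      rw [star_mul, star_star, star_mul, A.star_P (hτ ab hab)]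
    rw [hv, hvs, Finset.sum_mul_sum]
    refine ⟨F.toList.map (fun ab => (ab.1, ρ ab)), ?_, ?_⟩
    · rintro e he
      simp only [List.mem_map] at he
      obtain ⟨ab, habL, rfl⟩ := he
      have hab := Finset.mem_toList.mp habL
      exact ⟨(hmce ab hab).1, hρ ab hab⟩
    · rw [List.map_map, Finset.sum_map_toList]
      refine Finset.sum_congr rfl fun ab hab => ?_
      rw [Finset.sum_eq_single_of_mem ab hab]
      · -- diagonal term
        have hterm : (ab.1 * ρ ab) * star (ab.1 * ρ ab) = ab.1 * ρ ab * star ab.1 := by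
          rw [star_mul, A.star_P (hρ ab hab)]
          calc (ab.1 * ρ ab) * (ρ ab * star ab.1)
              = ab.1 * ((ρ ab * ρ ab) * star ab.1) := by noncomm_ring
            _ = ab.1 * (ρ ab * star ab.1) := by rw [A.sq_P (hρ ab hab)]
            _ = ab.1 * ρ ab * star ab.1 := by noncomm_ring
        simp only [Function.comp_apply]
        rw [hterm]
        simp only [hρdef]
        noncomm_ring
      · -- off-diagonal terms vanish
        intro ab' hab' hne
        have h2ne : ab.2 ≠ ab'.2 := fun h2 => hne (A.mce_inj hyT (A.T_subset_T1 hsT)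
          (hmce ab' hab') (hmce ab hab) h2.symm)
        have horth : star ab.2 * ab'.2 = 0 :=
          A.orth (hmce ab hab).2.1 (hmce ab' hab').2.1
            (A.mce_deg_snd (A.T_subset_T1 hyT) (A.T_subset_T1 hsT)
              (hmce ab hab) (hmce ab' hab')) h2ne
        calc ((ab.1 * τ ab) * star ab.2) * (ab'.2 * (τ ab' * star ab'.1))
            = (ab.1 * τ ab) * ((star ab.2 * ab'.2) * (τ ab' * star ab'.1)) := by
              noncomm_ring
          _ = 0 := by rw [horth]; simp

/-- Half-standardness of entries for part (a). -/
lemma stepA_list (x : X × Bool) (hx : x.1 ∈ A.T ∪ A.P) (L' : List (X × X))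
    (h : ∀ e ∈ L', e.1 ∈ A.T1 ∧ e.2 ∈ A.P) :
    ∃ L : List (X × X),
      (∀ e ∈ L, e.1 ∈ A.T1 ∧ e.2 ∈ A.P) ∧
      (L'.map fun e => ((if x.2 then star x.1 else x.1) * (e.1 * e.2)) *
          star ((if x.2 then star x.1 else x.1) * (e.1 * e.2))).sum =
        (L.map fun e => (e.1 * e.2) * star (e.1 * e.2)).sum := by
  induction L' with
  | nil => exact ⟨[], by simp, by simp⟩
  | cons e L' ih =>
    obtain ⟨he1, he2⟩ := h e (List.mem_cons_self)
    obtain ⟨L₁, hL₁good, hL₁sum⟩ := A.stepA x hx he1 he2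
    obtain ⟨L₂, hL₂, hL₂sum⟩ := ih (fun e' he' => h e' (List.mem_cons_of_mem _ he'))
    refine ⟨L₁ ++ L₂, ?_, ?_⟩
    · intro e' he'
      rcases List.mem_append.mp he' with h1 | h2
      · exact hL₁good e' h1
      · exact hL₂ e' h2
    · rw [List.map_cons, List.sum_cons, List.map_append, List.sum_append,
        hL₁sum, hL₂sum]

lemma repA (l : List (X × Bool)) (hl : A.IsWordList l) :
    ∃ L : List (X × X),
      (∀ e ∈ L, e.1 ∈ A.T1 ∧ e.2 ∈ A.P) ∧
      evalWord l * star (evalWord l) =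
        (L.map fun e => (e.1 * e.2) * star (e.1 * e.2)).sum := by
  obtain ⟨hne, hmem⟩ := hl
  induction l with
  | nil => exact absurd rfl hne
  | cons a l ih =>
    have ha := hmem a (List.mem_cons_self)
    rcases l with _ | ⟨b, l'⟩
    · -- single letter
      rcases ha with haT | haP
      · have hq0 := A.star_mul_self_mem_P haT
        have pis : a.1 * (star a.1 * a.1) = a.1 := by
          rw [← mul_assoc]; exact A.T_pisom a.1 haT
        rcases hf : a.2 with _ | _
        · refine ⟨[(a.1, star a.1 * a.1)], ?_, ?_⟩
          · rintro e he
            simp only [List.mem_singleton] at he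
            subst he
            exact ⟨A.T_subset_T1 haT, hq0⟩
          · simp only [List.map_cons, List.map_nil, List.sum_cons, List.sum_nil, add_zero]
            rw [pis]
            simp [evalWord, hf]
        · refine ⟨[(1, star a.1 * a.1)], ?_, ?_⟩
          · rintro e he
            simp only [List.mem_singleton] at he
            subst he
            exact ⟨A.one_mem_T1, hq0⟩
          · simp only [List.map_cons, List.map_nil, List.sum_cons, List.sum_nil, add_zero]
            rw [one_mul, A.star_P hq0, A.sq_P hq0]
            simp [evalWord, hf]
      · refine ⟨[(1, a.1)], ?_, ?_⟩
        · rintro e he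
          simp only [List.mem_singleton] at he
          subst he
          exact ⟨A.one_mem_T1, haP⟩
        · simp only [List.map_cons, List.map_nil, List.sum_cons, List.sum_nil, add_zero]
          rw [one_mul, A.star_P haP, A.sq_P haP]
          cases hf : a.2 <;> simp [evalWord, hf, A.star_P haP, A.sq_P haP]
    · -- at least two letters
      obtain ⟨L', hL', hsum'⟩ := ih (List.cons_ne_nil _ _)
        (fun e he => hmem e (List.mem_cons_of_mem _ he))
      obtain ⟨L, hL, hsum⟩ := A.stepA_list a ha L' hL'
      refine ⟨L, hL, ?_⟩
      set v : X := if a.2 then star a.1 else a.1 with hvdef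
      have h1 : evalWord (a :: b :: l') = v * evalWord (b :: l') := evalWord_cons _ _
      calc evalWord (a :: b :: l') * star (evalWord (a :: b :: l'))
          = v * (evalWord (b :: l') * star (evalWord (b :: l'))) * star v := by
            rw [h1, ← conj_sq]
        _ = v * (L'.map fun e => (e.1 * e.2) * star (e.1 * e.2)).sum * star v := by
            rw [hsum']
        _ = ((L'.map fun e => v * ((e.1 * e.2) * star (e.1 * e.2))).sum) * star v := by
            rw [List.sum_map_mul_left]
        _ = (L'.map fun e => v * ((e.1 * e.2) * star (e.1 * e.2)) * star v).sum :=
            (List.sum_map_mul_right L'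
              (fun e => v * ((e.1 * e.2) * star (e.1 * e.2))) (star v)).symm
        _ = (L'.map fun e => (v * (e.1 * e.2)) * star (v * (e.1 * e.2))).sum := by
            refine congrArg _ (List.map_congr_left fun e he => ?_)
            exact conj_sq v (e.1 * e.2)
        _ = (L.map fun e => (e.1 * e.2) * star (e.1 * e.2)).sum := hsum

end SemigraphAlgebra
open SemigraphAlgebra in
/-- Lemma `semigraphwordrep`(b) and Corollary `corollarySpannedStandardWords`:
for every word `w`, `ww*` is a finite sum of range projections of
half-standard words, and `w = Σⱼ bⱼcⱼ*` with `bⱼ, cⱼ` half-standard and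
`d(w) = d(bⱼ) - d(cⱼ)`; in particular every word lies in the linear span of the
standard words `𝒯₁𝒫𝒯₁*`. -/
theorem SemigraphAlgebra.word_standard_decomposition
    {k X : Type*} [Ring X] [StarRing X] [Algebra ℂ X]
    (A : SemigraphAlgebra k X) (l : List (X × Bool)) (hl : A.IsWordList l) :
    (∃ (n : ℕ) (s p : Fin n → X),
      (∀ i, s i ∈ A.T1 ∧ p i ∈ A.P) ∧
      evalWord l * star (evalWord l) =
        ∑ i, (s i * p i) * star (s i * p i)) ∧
    (∃ (m : ℕ) (s t p q : Fin m → X),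
      (∀ j, s j ∈ A.T1 ∧ t j ∈ A.T1 ∧ p j ∈ A.P ∧ q j ∈ A.P) ∧
      evalWord l = ∑ j, (s j * p j) * star (t j * q j) ∧
      ∀ j, A.wordDeg l =
        (A.deg (s j)).mapRange (Nat.cast) Nat.cast_zero -
          (A.deg (t j)).mapRange (Nat.cast) Nat.cast_zero) ∧
    evalWord l ∈ Submodule.span ℂ A.standardWords := by
  obtain ⟨LA, hLA, hsumA⟩ := A.repA l hl
  obtain ⟨LB, hLB, hsumB⟩ := A.repB l hl
  have hevalA : evalWord l * star (evalWord l) =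
      ∑ i : Fin LA.length, ((LA.get i).1 * (LA.get i).2) *
        star ((LA.get i).1 * (LA.get i).2) := by
    rw [hsumA, ← sum_fin_map LA (fun e => (e.1 * e.2) * star (e.1 * e.2))]
  have hevalB : evalWord l =
      ∑ j : Fin LB.length, ((LB.get j).1 * (LB.get j).2.1) *
        star ((LB.get j).2.2.1 * (LB.get j).2.2.2) := by
    rw [hsumB, ← sum_fin_map LB (fun e => (e.1 * e.2.1) * star (e.2.2.1 * e.2.2.2))]
  have hmemB : ∀ j : Fin LB.length, LB.get j ∈ LB := fun j => List.get_mem LB j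
  have hmemA : ∀ i : Fin LA.length, LA.get i ∈ LA := fun i => List.get_mem LA i
  refine ⟨?_, ?_, ?_⟩
  · exact ⟨LA.length, fun i => (LA.get i).1, fun i => (LA.get i).2,
      fun i => hLA _ (hmemA i), hevalA⟩
  · refine ⟨LB.length, fun j => (LB.get j).1, fun j => (LB.get j).2.2.1,
      fun j => (LB.get j).2.1, fun j => (LB.get j).2.2.2, ?_, hevalB, ?_⟩
    · intro j
      obtain ⟨⟨h1, h2, h3, h4⟩, _⟩ := hLB _ (hmemB j)
      exact ⟨h1, h3, h2, h4⟩
    · intro j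
      exact ((hLB _ (hmemB j)).2).symm
  · rw [hevalB]
    refine Submodule.sum_mem _ fun j _ => Submodule.subset_span ?_
    obtain ⟨⟨h1, h2, h3, h4⟩, _⟩ := hLB _ (hmemB j)
    refine ⟨(LB.get j).1, (LB.get j).2.2.1, (LB.get j).2.1 * (LB.get j).2.2.2,
      h1, h3, A.P_mulClosed _ h2 _ h4, ?_⟩
    rw [star_mul, A.star_P h4]
    noncomm_ring
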